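/- Let $k$ be a perfect field of characteristic $p > 0$, $K = k((t))$, and $f, g \in K^{\times}$ with $v(f) = 0$ (i.e. $f \in k[[t]]^{\times}$) and $v(g) = -r < 0$. Assume $g f'/f \in k[[t]]$ (where $f'$ is the formal derivative). Then the image of $f$ in $K^{\times}/((K^{\times})^p \cdot (1 + t^{r+1}k[[t]]))$ is trivial. -/

import Mathlib

open PowerSeries

-- step A: power series core lemma
theorem core (k : Type*) [Field k] [PerfectField k] (p : ℕ) [Fact p.Prime] [CharP k p]
    (r : ℕ) (F : PowerSeries k) (h0 : constantCoeff F ≠ 0)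
    (hder : ∀ i < r, coeff i F.derivativeFun = 0) :
    ∃ G : PowerSeries k, constantCoeff G ≠ 0 ∧
      (X : PowerSeries k) ^ (r + 1) ∣ F - G ^ p := by
  classical
  have hp : 0 < p := (Fact.out : p.Prime).pos
  -- coefficients not divisible by p vanish up to r
  have hvan : ∀ n, n ≤ r → ¬ p ∣ n → coeff n F = 0 := by
    intro n hn hdvd
    have hn1 : 1 ≤ n := by
      rcases Nat.eq_zero_or_pos n with h | h
      · exact absurd (h ▸ dvd_zero p) hdvd
      · exact h
    have := hder (n - 1) (by omega)
    rw [derivativeFun] at this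
    erw [coeff_derivative] at this
    have hn' : n - 1 + 1 = n := by omega
    rw [hn'] at this
    have hcast : ((n - 1 : ℕ) : k) + 1 = (n : k) := by
      rw [Nat.cast_sub hn1]; push_cast; ring
    rw [hcast] at this
    have hne : ((n : k)) ≠ 0 := by
      rw [Ne, CharP.cast_eq_zero_iff k p n]
      exact hdvd
    exact (mul_eq_zero.1 this).resolve_right hne
  -- build the root polynomial
  set b : ℕ → k := fun j => (frobeniusEquiv k p).symm (coeff (p * j) F) with hb
  set T : Polynomial k := ∑ j ∈ Finset.range (r + 1), Polynomial.monomial j (b j) with hT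
  have hTcoeff : ∀ j, T.coeff j = if j ≤ r then b j else 0 := by
    intro j
    rw [hT, Polynomial.finset_sum_coeff]
    simp only [Polynomial.coeff_monomial]
    by_cases h : j ≤ r
    · rw [if_pos h, Finset.sum_eq_single j]
      · simp
      · intro i _ hij; exact if_neg (fun e => hij e)
      · intro hj; exact absurd (Finset.mem_range.2 (by omega)) hj
    · rw [if_neg h, Finset.sum_eq_zero]
      intro i hi
      rw [Finset.mem_range] at hi
      exact if_neg (by omega)
  have hroot : ∀ x : k, ((frobeniusEquiv k p).symm x) ^ p = x := by
    intro x
    conv_rhs => rw [← RingEquiv.apply_symm_apply (frobeniusEquiv k p) x]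
    rw [frobeniusEquiv_apply, frobenius_def]
  have hTp : ∀ n ≤ r, (T ^ p).coeff n = if p ∣ n then (b (n / p))^p else 0 := by
    intro n hn
    rw [← Polynomial.map_frobenius_expand, Polynomial.coeff_map, Polynomial.coeff_expand hp]
    split_ifs with h
    · rw [frobenius_def, hTcoeff, if_pos (le_trans (Nat.div_le_self n p) hn)]
    · simp
  refine ⟨(T : PowerSeries k), ?_, ?_⟩
  · rw [← coeff_zero_eq_constantCoeff_apply, Polynomial.coeff_coe, hTcoeff]
    simp only [if_pos (Nat.zero_le r)]
    rw [hb]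
    simp only [Nat.mul_zero]
    intro h
    apply h0
    have := congrArg (frobeniusEquiv k p) h
    rw [RingEquiv.apply_symm_apply, map_zero] at this
    simpa using this
  · rw [X_pow_dvd_iff]
    intro n hn
    have hn' : n ≤ r := by omega
    rw [map_sub, ← Polynomial.coe_pow, Polynomial.coeff_coe, hTp n hn']
    split_ifs with h
    · have hdiv : p * (n / p) = n := Nat.mul_div_cancel' h
      rw [hb]
      simp only
      rw [hroot, hdiv, sub_self]
    · rw [hvan n hn' h, sub_zero]

theorem ofPS_coeff_neg {k : Type*} [Field k] (Q : PowerSeries k) (m : ℤ) (hm : m < 0) :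
    (HahnSeries.ofPowerSeries ℤ k Q).coeff m = 0 := by
  rw [HahnSeries.ofPowerSeries_apply, HahnSeries.embDomain_notin_range]
  rintro ⟨n, hn⟩
  have : (n : ℤ) = m := hn
  omega

theorem ofPS_order_nonneg {k : Type*} [Field k] (Q : PowerSeries k)
    (hQ : HahnSeries.ofPowerSeries ℤ k Q ≠ 0) : 0 ≤ (HahnSeries.ofPowerSeries ℤ k Q).order := by
  by_contra h
  exact (HahnSeries.coeff_order_eq_zero.not.2 hQ) (ofPS_coeff_neg Q _ (by omega))


/-- Let `k` be perfect of characteristic `p > 0` and `K = k((t))`. Let `f, g ∈ K^×` with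
`v(f) = 0` and `v(g) = -r < 0`, and assume `g·f'/f ∈ k[[t]]`. Then the class of `f` in
`K^×/((K^×)ᵖ · (1 + t^{r+1} k[[t]]))` is trivial, i.e. `f = hᵖ · w` with `h ∈ K^×` and
`w ∈ 1 + t^{r+1} k[[t]]`. -/
theorem stmt_12 (k : Type*) [Field k] [PerfectField k] (p : ℕ) [Fact p.Prime] [CharP k p]
    (r : ℕ) (hr : 1 ≤ r) (f g : LaurentSeries k) (hf : f ≠ 0) (hg : g ≠ 0)
    (hvf : f.order = 0) (hvg : g.order = -(r : ℤ))
    (hreg : g * (HahnSeries.ofPowerSeries ℤ k f.powerSeriesPart.derivativeFun) * f⁻¹ ∈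
      Set.range (HahnSeries.ofPowerSeries ℤ k)) :
    ∃ (h : LaurentSeries k) (w : PowerSeries k), h ≠ 0 ∧
      (X : PowerSeries k) ^ (r + 1) ∣ w - 1 ∧
      f = h ^ p * (HahnSeries.ofPowerSeries ℤ k w) := by
  classical
  set F := f.powerSeriesPart with hF
  have hofF : HahnSeries.ofPowerSeries ℤ k F = f := by
    rw [hF, LaurentSeries.ofPowerSeries_powerSeriesPart, hvf, neg_zero,
      HahnSeries.single_zero_one, one_mul]
  have h0 : constantCoeff F ≠ 0 := by
    rw [← coeff_zero_eq_constantCoeff_apply, hF, LaurentSeries.powerSeriesPart_coeff]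
    simpa using (HahnSeries.coeff_order_eq_zero.not.2 hf)
  have hder : ∀ i < r, coeff i F.derivativeFun = 0 := by
    by_cases hd0 : F.derivativeFun = 0
    · intro i _; rw [hd0, map_zero]
    · obtain ⟨Q, hQ⟩ := hreg
      set D := HahnSeries.ofPowerSeries ℤ k F.derivativeFun with hD
      have hDne : D ≠ 0 := by
        intro h
        apply hd0
        apply HahnSeries.ofPowerSeries_injective (Γ := ℤ)
        rw [← hD, h, map_zero]
      have hfi : f⁻¹ ≠ 0 := inv_ne_zero hf
      have hQne : HahnSeries.ofPowerSeries ℤ k Q ≠ 0 := by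
        rw [hQ]; exact mul_ne_zero (mul_ne_zero hg hDne) hfi
      have hfiord : f⁻¹.order = 0 := by
        have h1 : (f * f⁻¹).order = f.order + f⁻¹.order := HahnSeries.order_mul hf hfi
        rw [mul_inv_cancel₀ hf, HahnSeries.order_one, hvf, zero_add] at h1
        omega
      have hords : (HahnSeries.ofPowerSeries ℤ k Q).order = -(r : ℤ) + D.order := by
        rw [hQ, HahnSeries.order_mul (mul_ne_zero hg hDne) hfi,
          HahnSeries.order_mul hg hDne, hfiord, hvg, add_zero]
      have hDord : (r : ℤ) ≤ D.order := by
        have := ofPS_order_nonneg Q hQne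
        omega
      intro i hi
      rw [← HahnSeries.ofPowerSeries_apply_coeff (Γ := ℤ) F.derivativeFun i, ← hD]
      exact HahnSeries.coeff_eq_zero_of_lt_order (by omega : (i : ℤ) < D.order)
  obtain ⟨G, hG0, hGdvd⟩ := core k p r F h0 hder
  set Gp := G ^ p with hGp
  have hGp0 : constantCoeff Gp ≠ 0 := by
    rw [hGp, map_pow]; exact pow_ne_zero p hG0
  set w := F * Gp⁻¹ with hw
  have hGpw : Gp * w = F := by
    rw [hw, mul_comm F Gp⁻¹, ← mul_assoc, PowerSeries.mul_inv_cancel Gp hGp0, one_mul]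
  refine ⟨HahnSeries.ofPowerSeries ℤ k G, w, ?_, ?_, ?_⟩
  · intro h
    apply hG0
    have : G = 0 := by
      apply HahnSeries.ofPowerSeries_injective (Γ := ℤ)
      rw [h, map_zero]
    rw [this, map_zero]
  · have : w - 1 = Gp⁻¹ * (F - Gp) := by
      rw [mul_sub, hw, mul_comm F Gp⁻¹, PowerSeries.inv_mul_cancel Gp hGp0]
    rw [this]
    exact Dvd.dvd.mul_left hGdvd _
  · rw [← hofF, ← hGpw, map_mul, hGp, map_pow]
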